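/- Let X be a normal Hausdorff space. The map T sending each bounded from below lower semicontinuous f : X → ℝ to the restriction of (f^×)* to the weak*-closed convex hull of Δ(X) is a bijection from SCI(X) onto Γ(co̅^{w*}(Δ(X))), satisfies T(αf + βg) = αT(f) + βT(g) for α, β ≥ 0, and is an order isomorphism: f ≤ g if and only if T(f) ≤ T(g). -/

import Mathlib

open BoundedContinuousFunction

variable {X : Type*} [TopologicalSpace X]

/-- `SCI X`: real-valued, bounded from below, lower semicontinuous functions. -/
def IsSCI (f : X → ℝ) : Prop :=
  LowerSemicontinuous f ∧ ∃ m : ℝ, ∀ x, m ≤ f x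

/-- The weak*-closed convex hull of the range of the Dirac map `Δ`. -/
noncomputable def HullOf (Δ : X → WeakDual ℝ (X →ᵇ ℝ)) : Set (WeakDual ℝ (X →ᵇ ℝ)) :=
  closure (convexHull ℝ (Set.range Δ))

/-- The operator `T`: the restriction of `(f^×)* : Q ↦ sup_φ (Q(φ) − sup_x(φ x − f x))`
to the weak*-closed convex hull of `Δ(X)`. -/
noncomputable def Tmap (Δ : X → WeakDual ℝ (X →ᵇ ℝ)) (f : X → ℝ)
    (Q : {Q : WeakDual ℝ (X →ᵇ ℝ) // Q ∈ HullOf Δ}) : EReal :=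
  ⨆ φ : X →ᵇ ℝ, (((Q : WeakDual ℝ (X →ᵇ ℝ)) φ : EReal) - ⨆ x : X, ((φ x - f x : ℝ) : EReal))

/-- Membership in `Γ(co̅^{w*}(Δ(X)))`: restrictions of support functions of
(nonempty) Δ-sets `A = {φ : ∀ x, φ x ≤ λ_x}`. -/
def IsGamma (Δ : X → WeakDual ℝ (X →ᵇ ℝ))
    (g : {Q : WeakDual ℝ (X →ᵇ ℝ) // Q ∈ HullOf Δ} → EReal) : Prop :=
  ∃ lam : X → ℝ, {φ : X →ᵇ ℝ | ∀ x, φ x ≤ lam x}.Nonempty ∧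
    ∀ Q, g Q = ⨆ φ : {φ : X →ᵇ ℝ // ∀ x, φ x ≤ lam x},
      ((Q : WeakDual ℝ (X →ᵇ ℝ)) (φ : X →ᵇ ℝ) : EReal)

namespace ConeIsoProof

/-! ### EReal helper lemmas -/

lemma ereal_mul_le {a : ℝ} (ha : 0 ≤ a) {x y : EReal} (h : x ≤ y) :
    (a : EReal) * x ≤ (a : EReal) * y :=
  mul_le_mul_of_nonneg_left h (by exact_mod_cast ha)

lemma ereal_mul_iSup {ι : Sort*} [Nonempty ι] {a : ℝ} (ha : 0 ≤ a) (u : ι → EReal) :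
    (a : EReal) * (⨆ i, u i) = ⨆ i, (a : EReal) * u i := by
  rcases ha.eq_or_lt with rfl | ha'
  · simp only [EReal.coe_zero, zero_mul, iSup_const]
  · apply le_antisymm
    · have hinv : ∀ i, u i ≤ ((a⁻¹ : ℝ) : EReal) * ⨆ j, (a : EReal) * u j := by
        intro i
        have h1 : ((a⁻¹ : ℝ) : EReal) * ((a : EReal) * u i)
            ≤ ((a⁻¹ : ℝ) : EReal) * ⨆ j, (a : EReal) * u j :=
          ereal_mul_le (inv_nonneg.2 ha) (le_iSup (fun j => (a : EReal) * u j) i)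
        calc u i = ((a⁻¹ : ℝ) : EReal) * ((a : EReal) * u i) := by
              rw [← mul_assoc, ← EReal.coe_mul, inv_mul_cancel₀ ha'.ne', EReal.coe_one, one_mul]
          _ ≤ _ := h1
      calc (a : EReal) * ⨆ i, u i
          ≤ (a : EReal) * (((a⁻¹ : ℝ) : EReal) * ⨆ j, (a : EReal) * u j) :=
            ereal_mul_le ha (iSup_le hinv)
        _ = ⨆ j, (a : EReal) * u j := by
            rw [← mul_assoc, ← EReal.coe_mul, mul_inv_cancel₀ ha'.ne', EReal.coe_one, one_mul]
    · exact iSup_le fun i => ereal_mul_le ha (le_iSup _ i)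

lemma ereal_le_of_forall_add_eps {x y : EReal} (hy : y ≠ ⊥)
    (h : ∀ ε : ℝ, 0 < ε → x ≤ y + (ε : EReal)) : x ≤ y := by
  by_cases hyt : y = ⊤
  · simp [hyt]
  obtain ⟨r, rfl⟩ : ∃ r : ℝ, y = (r : EReal) := ⟨y.toReal, (EReal.coe_toReal hyt hy).symm⟩
  induction x using EReal.rec with
  | bot => exact bot_le
  | coe x =>
      refine EReal.coe_le_coe_iff.2 (le_of_forall_pos_le_add fun ε hε => ?_)
      have h2 := h ε hε
      rw [← EReal.coe_add] at h2
      exact EReal.coe_le_coe_iff.1 h2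
  | top =>
      exfalso
      have h2 := h 1 one_pos
      rw [← EReal.coe_add] at h2
      exact (EReal.coe_lt_top (r + 1)).not_ge h2

/-! ### The Dirac map and the hull -/

noncomputable def Del : X → WeakDual ℝ (X →ᵇ ℝ) :=
  fun x => StrongDual.toWeakDual (BoundedContinuousFunction.evalCLM ℝ x)

@[simp] lemma Del_apply (x : X) (φ : X →ᵇ ℝ) : Del x φ = φ x := rfl

lemma Del_mem (x : X) : Del x ∈ HullOf (Del (X := X)) :=
  subset_closure (subset_convexHull ℝ _ ⟨x, rfl⟩)

lemma nonempty_of_hull {Q : WeakDual ℝ (X →ᵇ ℝ)} (hQ : Q ∈ HullOf (Del (X := X))) :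
    Nonempty X := by
  by_contra h
  rw [not_nonempty_iff] at h
  rw [HullOf, Set.range_eq_empty, convexHull_empty, closure_empty] at hQ
  exact hQ

/-- The set of normalized positive functionals. -/
def Good : Set (WeakDual ℝ (X →ᵇ ℝ)) :=
  {Q | Q (const X (1 : ℝ)) = 1 ∧ ∀ φ : X →ᵇ ℝ, (∀ x, 0 ≤ φ x) → 0 ≤ Q φ}

lemma good_isClosed : IsClosed (Good (X := X)) := by
  have h1 : IsClosed {Q : WeakDual ℝ (X →ᵇ ℝ) | Q (const X (1 : ℝ)) = 1} :=
    isClosed_eq (WeakDual.eval_continuous _) continuous_const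
  have h2 : IsClosed {Q : WeakDual ℝ (X →ᵇ ℝ) | ∀ φ : X →ᵇ ℝ, (∀ x, 0 ≤ φ x) → 0 ≤ Q φ} := by
    have he : {Q : WeakDual ℝ (X →ᵇ ℝ) | ∀ φ : X →ᵇ ℝ, (∀ x, 0 ≤ φ x) → 0 ≤ Q φ} =
        ⋂ φ : {φ : X →ᵇ ℝ // ∀ x, 0 ≤ φ x},
          {Q : WeakDual ℝ (X →ᵇ ℝ) | 0 ≤ Q (φ : X →ᵇ ℝ)} := by
      ext Q
      simp only [Set.mem_iInter, Set.mem_setOf_eq, Subtype.forall]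
    rw [he]
    exact isClosed_iInter fun φ => isClosed_le continuous_const (WeakDual.eval_continuous _)
  exact h1.inter h2

lemma good_convex : Convex ℝ (Good (X := X)) := by
  intro Q hQ R hR s t hs ht hst
  constructor
  · show (s • Q + t • R) (const X (1 : ℝ)) = 1
    have he : (s • Q + t • R) (const X (1 : ℝ)) = s * Q (const X 1) + t * R (const X 1) := rfl
    rw [he, hQ.1, hR.1, mul_one, mul_one, hst]
  · intro φ hφ
    have he : (s • Q + t • R) φ = s * Q φ + t * R φ := rfl
    rw [he]
    exact add_nonneg (mul_nonneg hs (hQ.2 φ hφ)) (mul_nonneg ht (hR.2 φ hφ))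

lemma hull_subset_good : HullOf (Del (X := X)) ⊆ Good := by
  refine closure_minimal (convexHull_min ?_ good_convex) good_isClosed
  rintro _ ⟨x, rfl⟩
  exact ⟨rfl, fun φ hφ => hφ x⟩

lemma good_const {Q : WeakDual ℝ (X →ᵇ ℝ)} (hQ : Q ∈ Good (X := X)) (c : ℝ) :
    Q (const X c) = c := by
  have h : const X c = c • const X (1 : ℝ) := by ext x; simp
  rw [h, map_smul, hQ.1, smul_eq_mul, mul_one]

lemma good_mono {Q : WeakDual ℝ (X →ᵇ ℝ)} (hQ : Q ∈ Good (X := X)) {φ ψ : X →ᵇ ℝ}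
    (h : ∀ x, φ x ≤ ψ x) : Q φ ≤ Q ψ := by
  have h0 := hQ.2 (ψ - φ) (fun x => by simpa [sub_nonneg] using h x)
  rw [map_sub] at h0
  linarith

/-! ### The representation of `Tmap` as a support function -/

lemma tmap_def (f : X → ℝ) {Q : WeakDual ℝ (X →ᵇ ℝ)} (hQ : Q ∈ HullOf (Del (X := X))) :
    Tmap Del f ⟨Q, hQ⟩ =
      ⨆ φ : X →ᵇ ℝ, ((Q φ : EReal) - ⨆ x : X, ((φ x - f x : ℝ) : EReal)) := rfl

lemma rep {f : X → ℝ} (hf : IsSCI f) {Q : WeakDual ℝ (X →ᵇ ℝ)}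
    (hQ : Q ∈ HullOf (Del (X := X))) :
    Tmap Del f ⟨Q, hQ⟩ = ⨆ φ : {φ : X →ᵇ ℝ // ∀ x, φ x ≤ f x}, (Q (φ : X →ᵇ ℝ) : EReal) := by
  haveI hX : Nonempty X := nonempty_of_hull hQ
  obtain ⟨hlsc, m, hm⟩ := hf
  have hG := hull_subset_good hQ
  rw [tmap_def]
  apply le_antisymm
  · apply iSup_le
    intro φ
    have hbdd : BddAbove (Set.range fun x => φ x - f x) := by
      refine ⟨‖φ‖ - m, ?_⟩
      rintro _ ⟨x, rfl⟩
      show φ x - f x ≤ ‖φ‖ - m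
      have h1 : φ x ≤ ‖φ‖ := le_trans (le_abs_self _) (by simpa using φ.norm_coe_le_norm x)
      have h2 := hm x
      linarith
    have hS : (⨆ x : X, ((φ x - f x : ℝ) : EReal)) = ((⨆ x, (φ x - f x) : ℝ) : EReal) :=
      (Monotone.map_ciSup_of_continuousAt (continuous_coe_real_ereal.continuousAt)
        EReal.coe_strictMono.monotone hbdd).symm
    rw [hS]
    set c : ℝ := ⨆ x, (φ x - f x) with hc
    have hψle : ∀ x, (φ - const X c) x ≤ f x := by
      intro x
      have h1 : φ x - f x ≤ c := le_ciSup hbdd x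
      simp only [coe_sub, Pi.sub_apply, const_apply]
      linarith
    have hQψ : Q (φ - const X c) = Q φ - c := by
      rw [map_sub, good_const hG c]
    calc (Q φ : EReal) - (c : EReal) = ((Q φ - c : ℝ) : EReal) := (EReal.coe_sub _ _).symm
      _ = (Q ((⟨φ - const X c, hψle⟩ : {φ : X →ᵇ ℝ // ∀ x, φ x ≤ f x}) : X →ᵇ ℝ) : EReal) := by
          rw [hQψ]
      _ ≤ _ := le_iSup (fun ψ : {φ : X →ᵇ ℝ // ∀ x, φ x ≤ f x} => (Q (ψ : X →ᵇ ℝ) : EReal)) _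
  · apply iSup_le
    rintro ⟨ψ, hψ⟩
    have h1 : (⨆ x : X, ((ψ x - f x : ℝ) : EReal)) ≤ (0 : EReal) := by
      apply iSup_le
      intro x
      exact_mod_cast sub_nonpos.2 (hψ x)
    calc (Q ψ : EReal) = (Q ψ : EReal) - 0 := (sub_zero _).symm
      _ ≤ (Q ψ : EReal) - ⨆ x : X, ((ψ x - f x : ℝ) : EReal) := EReal.sub_le_sub le_rfl h1
      _ ≤ _ := le_iSup (fun φ : X →ᵇ ℝ =>
          (Q φ : EReal) - ⨆ x : X, ((φ x - f x : ℝ) : EReal)) ψ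


/-! ### Pointwise recovery via Urysohn's lemma -/

lemma recovery [T2Space X] [NormalSpace X] {f : X → ℝ} (hf : IsSCI f) (x : X) :
    (⨆ φ : {φ : X →ᵇ ℝ // ∀ x, φ x ≤ f x}, ((φ : X →ᵇ ℝ) x : EReal)) = (f x : EReal) := by
  obtain ⟨hlsc, m, hm⟩ := hf
  apply le_antisymm
  · exact iSup_le fun φ => EReal.coe_le_coe_iff.2 (φ.2 x)
  · refine le_of_forall_lt fun c hc => ?_
    obtain ⟨r, hcr, hrf⟩ := EReal.lt_iff_exists_real_btwn.1 hc
    have hrf' : r < f x := EReal.coe_lt_coe_iff.1 hrf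
    rcases le_or_gt r m with hrm | hmr
    · refine lt_of_lt_of_le hcr ?_
      refine le_trans (EReal.coe_le_coe_iff.2 hrm) ?_
      refine le_trans (le_of_eq ?_) (le_iSup
        (fun φ : {φ : X →ᵇ ℝ // ∀ x, φ x ≤ f x} => ((φ : X →ᵇ ℝ) x : EReal))
        ⟨const X m, fun y => by simpa using hm y⟩)
      simp
    · have hU : IsOpen (f ⁻¹' Set.Ioi r) := hlsc.isOpen_preimage r
      have hxU : x ∈ f ⁻¹' Set.Ioi r := hrf'
      have hd : Disjoint (f ⁻¹' Set.Ioi r)ᶜ {x} :=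
        Set.disjoint_singleton_right.2 (by simpa using hxU)
      obtain ⟨g, hg0, hg1, hg01⟩ :=
        exists_continuous_zero_one_of_isClosed hU.isClosed_compl isClosed_singleton hd
      have hbd : ∀ y, ‖m + (r - m) * g y‖ ≤ |m| + |r - m| := by
        intro y
        have h01 := hg01 y
        have habs : |(r - m) * g y| ≤ |r - m| := by
          calc |(r - m) * g y| = |r - m| * |g y| := abs_mul _ _
            _ ≤ |r - m| * 1 := by
                refine mul_le_mul_of_nonneg_left ?_ (abs_nonneg _)
                rw [abs_of_nonneg h01.1]; exact h01.2
            _ = |r - m| := mul_one _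
        rw [Real.norm_eq_abs]
        calc |m + (r - m) * g y| ≤ |m| + |(r - m) * g y| := abs_add_le _ _
          _ ≤ _ := by linarith
      set φ₀ : X →ᵇ ℝ := ofNormedAddCommGroup (fun y => m + (r - m) * g y)
        (by continuity) (|m| + |r - m|) hbd with hφ₀
      have hφapp : ∀ y, φ₀ y = m + (r - m) * g y := fun y => rfl
      have hφle : ∀ y, φ₀ y ≤ f y := by
        intro y
        rw [hφapp]
        by_cases hy : y ∈ f ⁻¹' Set.Ioi r
        · have h1 : g y ≤ 1 := (hg01 y).2
          have h2 : r < f y := hy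
          nlinarith [(hg01 y).1]
        · have h0 : g y = 0 := by simpa using hg0 hy
          rw [h0]
          have := hm y
          linarith
      have hφx : φ₀ x = r := by
        have h1 : g x = 1 := by simpa using hg1 rfl
        rw [hφapp, h1]; ring
      refine lt_of_lt_of_le hcr ?_
      refine le_trans (le_of_eq ?_) (le_iSup
        (fun φ : {φ : X →ᵇ ℝ // ∀ x, φ x ≤ f x} => ((φ : X →ᵇ ℝ) x : EReal)) ⟨φ₀, hφle⟩)
      rw [hφx]

lemma tmap_del [T2Space X] [NormalSpace X] {f : X → ℝ} (hf : IsSCI f) (x : X) :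
    Tmap Del f ⟨Del x, Del_mem x⟩ = (f x : EReal) := by
  rw [rep hf (Del_mem x)]
  exact recovery hf x

/-! ### Semicontinuity helpers -/

lemma usc_aux {a b : ℝ} (ha : 0 < a) (hb : 0 < b) (φ : X →ᵇ ℝ)
    {g : X → ℝ} (hg : LowerSemicontinuous g) :
    UpperSemicontinuous (fun x => (φ x - b * g x) / a) := by
  intro x y hy
  have hy' : φ x - b * g x < y * a := (div_lt_iff₀ ha).1 hy
  set η : ℝ := (y * a - (φ x - b * g x)) / (1 + b) with hηdef
  have hηpos : 0 < η := div_pos (by linarith) (by linarith)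
  have h1 : ∀ᶠ x' in nhds x, φ x' < φ x + η :=
    (φ.continuous.tendsto x).eventually (eventually_lt_nhds (by linarith))
  have h2 : ∀ᶠ x' in nhds x, g x - η < g x' := hg x (g x - η) (by linarith)
  filter_upwards [h1, h2] with x' hx1 hx2
  show (φ x' - b * g x') / a < y
  rw [div_lt_iff₀ ha]
  have hb' : b * (g x - η) ≤ b * g x' := mul_le_mul_of_nonneg_left hx2.le hb.le
  have hηs : η * (1 + b) = y * a - (φ x - b * g x) := by
    rw [hηdef]; field_simp
  nlinarith

lemma usc_max_const {u : X → ℝ} (hu : UpperSemicontinuous u) (C : ℝ) :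
    UpperSemicontinuous (fun x => max (u x) C) := by
  intro x y hy
  have hy1 : u x < y := lt_of_le_of_lt (le_max_left _ _) hy
  have hy2 : C < y := lt_of_le_of_lt (le_max_right _ _) hy
  filter_upwards [hu x y hy1] with x' h
  exact max_lt h hy2

lemma lsc_min_const {f : X → ℝ} (hf : LowerSemicontinuous f) (C : ℝ) :
    LowerSemicontinuous (fun x => min (f x) C) := by
  intro x y hy
  have hy1 : y < f x := lt_of_lt_of_le hy (min_le_left _ _)
  have hy2 : y < C := lt_of_lt_of_le hy (min_le_right _ _)
  filter_upwards [hf x y hy1] with x' h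
  exact lt_min h hy2

lemma lsc_comb {f g : X → ℝ} (hf : LowerSemicontinuous f) (hg : LowerSemicontinuous g)
    {a b : ℝ} (ha : 0 ≤ a) (hb : 0 ≤ b) :
    LowerSemicontinuous (fun x => a * f x + b * g x) := by
  intro x y hy
  set η : ℝ := (a * f x + b * g x - y) / (a + b + 1) with hηdef
  have hηpos : 0 < η := div_pos (by simpa using hy) (by linarith)
  have hηs : η * (a + b + 1) = a * f x + b * g x - y := by
    rw [hηdef]; field_simp
  filter_upwards [hf x (f x - η) (by linarith), hg x (g x - η) (by linarith)] with x' h1 h2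
  have ha' : a * (f x - η) ≤ a * f x' := mul_le_mul_of_nonneg_left h1.le ha
  have hb' : b * (g x - η) ≤ b * g x' := mul_le_mul_of_nonneg_left h2.le hb
  show y < a * f x' + b * g x'
  nlinarith


/-! ### Approximate Katetov–Tong insertion -/

lemma eps_insertion [NormalSpace X] {u v : X → ℝ} (hu : UpperSemicontinuous u)
    (hv : LowerSemicontinuous v) (huv : ∀ x, u x ≤ v x) {m M : ℝ}
    (hm : ∀ x, m ≤ u x) (hM : ∀ x, v x ≤ M) {ε : ℝ} (hε : 0 < ε) :
    ∃ ψ : X →ᵇ ℝ, (∀ x, u x - ε ≤ ψ x) ∧ ∀ x, ψ x ≤ v x := by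
  set δ : ℝ := ε / 2 with hδdef
  have hδ : 0 < δ := by positivity
  set n : ℕ := ⌈(M - m) / δ⌉₊ with hndef
  set t : ℕ → ℝ := fun j => m + j * δ with htdef
  have htsucc : ∀ j : ℕ, t (j + 1) = t j + δ := by
    intro j
    simp only [htdef]
    push_cast
    ring
  have ht0 : t 0 = m := by simp [htdef]
  have htM : M ≤ t n := by
    have h1 : (M - m) / δ ≤ (n : ℝ) := Nat.le_ceil _
    have h2 := (div_le_iff₀ hδ).1 h1
    simp only [htdef]
    linarith
  have hgex : ∀ i : ℕ, ∃ g : C(X, ℝ), (∀ x, v x ≤ t i → g x = 0) ∧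
      (∀ x, t (i + 1) ≤ u x → g x = 1) ∧ ∀ x, g x ∈ Set.Icc (0 : ℝ) 1 := by
    intro i
    have hB : IsClosed {x | v x ≤ t i} := hv.isClosed_preimage (t i)
    have hA : IsClosed {x | t (i + 1) ≤ u x} := hu.isClosed_preimage (t (i + 1))
    have hd : Disjoint {x | v x ≤ t i} {x | t (i + 1) ≤ u x} := by
      rw [Set.disjoint_left]
      rintro x hx1 hx2
      have h1 := huv x
      have h2 := htsucc i
      simp only [Set.mem_setOf_eq] at hx1 hx2
      linarith
    obtain ⟨g, hg0, hg1, hg01⟩ := exists_continuous_zero_one_of_isClosed hB hA hd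
    exact ⟨g, fun x hx => by simpa using hg0 hx, fun x hx => by simpa using hg1 hx, hg01⟩
  choose g hg0 hg1 hg01 using hgex
  have hg0' : ∀ i x, 0 ≤ g i x := fun i x => (hg01 i x).1
  have hg1' : ∀ i x, g i x ≤ 1 := fun i x => (hg01 i x).2
  set w : X → ℝ := fun x => m + ∑ i ∈ Finset.range n, δ * g i x with hwdef
  have hwapp : ∀ x, w x = m + ∑ i ∈ Finset.range n, δ * g i x := fun x => rfl
  have hw_le : ∀ x, w x ≤ v x + δ := by
    intro x
    have hterm : ∀ i ∈ Finset.range n,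
        δ * g i x ≤ min (v x + δ) (t (i + 1)) - min (v x + δ) (t i) := by
      intro i _
      rcases le_or_gt (v x + δ) (t i) with h | h
      · have h0 : g i x = 0 := hg0 i x (by linarith)
        have e1 : min (v x + δ) (t i) = v x + δ := min_eq_left h
        have e2 : min (v x + δ) (t (i + 1)) = v x + δ := min_eq_left (by rw [htsucc]; linarith)
        rw [h0, e1, e2]
        simp
      · rcases le_or_gt (t (i + 1)) (v x + δ) with h2 | h2
        · have e1 : min (v x + δ) (t i) = t i := min_eq_right h.le
          have e2 : min (v x + δ) (t (i + 1)) = t (i + 1) := min_eq_right h2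
          rw [e1, e2, htsucc]
          have := hg1' i x
          nlinarith
        · have h0 : g i x = 0 := hg0 i x (by rw [htsucc] at h2; linarith)
          have e1 : min (v x + δ) (t i) = t i := min_eq_right h.le
          have e2 : min (v x + δ) (t (i + 1)) = v x + δ := min_eq_left h2.le
          rw [h0, e1, e2]
          linarith
    have tele := Finset.sum_range_sub (f := fun j => min (v x + δ) (t j)) n
    have hsum : ∑ i ∈ Finset.range n, δ * g i x
        ≤ min (v x + δ) (t n) - min (v x + δ) (t 0) := by
      calc ∑ i ∈ Finset.range n, δ * g i x
          ≤ ∑ i ∈ Finset.range n, (min (v x + δ) (t (i + 1)) - min (v x + δ) (t i)) :=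
            Finset.sum_le_sum hterm
        _ = _ := tele
    have h0 : min (v x + δ) (t 0) = m := by
      rw [ht0]
      exact min_eq_right (by linarith [hm x, huv x])
    have h1 : min (v x + δ) (t n) ≤ v x + δ := min_le_left _ _
    rw [hwapp]
    linarith
  have hw_ge : ∀ x, u x - δ ≤ w x := by
    intro x
    have hterm : ∀ i ∈ Finset.range n,
        min (u x - δ) (t (i + 1)) - min (u x - δ) (t i) ≤ δ * g i x := by
      intro i _
      rcases le_or_gt (u x - δ) (t i) with h | h
      · have e1 : min (u x - δ) (t i) = u x - δ := min_eq_left h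
        have e2 : min (u x - δ) (t (i + 1)) = u x - δ := min_eq_left (by rw [htsucc]; linarith)
        rw [e1, e2]
        have := hg0' i x
        nlinarith
      · have hgi : g i x = 1 := hg1 i x (by rw [htsucc]; linarith)
        have e1 : min (u x - δ) (t i) = t i := min_eq_right h.le
        rw [hgi, e1, mul_one]
        have h2 : min (u x - δ) (t (i + 1)) ≤ t (i + 1) := min_le_right _ _
        have h3 := htsucc i
        linarith
    have tele := Finset.sum_range_sub (f := fun j => min (u x - δ) (t j)) n
    have hsum : min (u x - δ) (t n) - min (u x - δ) (t 0)
        ≤ ∑ i ∈ Finset.range n, δ * g i x := by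
      calc min (u x - δ) (t n) - min (u x - δ) (t 0)
          = ∑ i ∈ Finset.range n, (min (u x - δ) (t (i + 1)) - min (u x - δ) (t i)) := tele.symm
        _ ≤ _ := Finset.sum_le_sum hterm
    have hn1 : min (u x - δ) (t n) = u x - δ :=
      min_eq_left (by linarith [huv x, hM x, htM])
    have hn0 : min (u x - δ) (t 0) ≤ m := by rw [ht0]; exact min_le_right _ _
    rw [hwapp]
    linarith
  have hw_lb : ∀ x, m ≤ w x := by
    intro x
    rw [hwapp]
    have : (0 : ℝ) ≤ ∑ i ∈ Finset.range n, δ * g i x :=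
      Finset.sum_nonneg fun i _ => mul_nonneg hδ.le (hg0' i x)
    linarith
  have hw_ub : ∀ x, w x ≤ M + δ := fun x => le_trans (hw_le x) (by linarith [hM x])
  have hwcont : Continuous w := by
    apply continuous_const.add
    exact continuous_finset_sum _ fun i _ => continuous_const.mul (g i).continuous
  have hbd : ∀ x, ‖w x - δ‖ ≤ |m - δ| + |M| := by
    intro x
    rw [Real.norm_eq_abs, abs_le]
    constructor
    · have h1 : -(|m - δ|) ≤ m - δ := neg_abs_le _
      have h2 : (0 : ℝ) ≤ |M| := abs_nonneg _
      have := hw_lb x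
      linarith
    · have h1 : M + δ - δ ≤ |M| := by simpa using le_abs_self M
      have h2 : (0 : ℝ) ≤ |m - δ| := abs_nonneg _
      have := hw_ub x
      linarith
  refine ⟨ofNormedAddCommGroup (fun x => w x - δ) (hwcont.sub continuous_const)
    (|m - δ| + |M|) hbd, fun x => ?_, fun x => ?_⟩
  · show u x - ε ≤ w x - δ
    have := hw_ge x
    rw [hδdef] at *
    linarith
  · show w x - δ ≤ v x
    have := hw_le x
    linarith


/-! ### Decomposition lemma via approximate insertion -/

lemma decompose [NormalSpace X] {f g : X → ℝ} (hf : IsSCI f) (hg : IsSCI g)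
    {a b : ℝ} (ha : 0 < a) (hb : 0 < b) {φ : X →ᵇ ℝ}
    (hφ : ∀ x, φ x ≤ a * f x + b * g x) {ε : ℝ} (hε : 0 < ε) :
    ∃ ψ χ : X →ᵇ ℝ, (∀ x, ψ x ≤ f x) ∧ (∀ x, χ x ≤ g x) ∧
      φ = a • ψ + b • χ + const X ε := by
  obtain ⟨hflsc, mf, hmf⟩ := hf
  obtain ⟨hglsc, mg, hmg⟩ := hg
  set u₀ : X → ℝ := fun x => (φ x - b * g x) / a with hu₀def
  have hu₀ : UpperSemicontinuous u₀ := usc_aux ha hb φ hglsc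
  set u : X → ℝ := fun x => max (u₀ x) mf with hudef
  have hu : UpperSemicontinuous u := usc_max_const hu₀ mf
  set C : ℝ := max ((‖φ‖ + b * |mg|) / a) mf with hCdef
  set v : X → ℝ := fun x => min (f x) C with hvdef
  have hv : LowerSemicontinuous v := lsc_min_const hflsc C
  have hu₀C : ∀ x, u₀ x ≤ C := by
    intro x
    have h1 : φ x ≤ ‖φ‖ := le_trans (le_abs_self _) (by simpa using φ.norm_coe_le_norm x)
    have h2 : -g x ≤ |mg| := le_trans (neg_le_neg (hmg x)) (neg_le_abs mg)
    have h3 : b * (-g x) ≤ b * |mg| := mul_le_mul_of_nonneg_left h2 hb.le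
    have h4 : φ x - b * g x ≤ ‖φ‖ + b * |mg| := by linarith
    have h5 : u₀ x ≤ (‖φ‖ + b * |mg|) / a := by
      rw [hu₀def]
      exact div_le_div_of_nonneg_right h4 ha.le
    exact le_trans h5 (le_max_left _ _)
  have hu₀f : ∀ x, u₀ x ≤ f x := by
    intro x
    rw [hu₀def]
    rw [div_le_iff₀ ha]
    have := hφ x
    linarith [mul_comm (f x) a]
  have huv : ∀ x, u x ≤ v x := by
    intro x
    refine le_min (max_le (hu₀f x) (hmf x)) (max_le (hu₀C x) (le_max_right _ _))
  have hmu : ∀ x, mf ≤ u x := fun x => le_max_right _ _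
  have hMv : ∀ x, v x ≤ C := fun x => min_le_right _ _
  have hεa : 0 < ε / a := div_pos hε ha
  obtain ⟨ψ, hψ1, hψ2⟩ := eps_insertion hu hv huv hmu hMv hεa
  have hψf : ∀ x, ψ x ≤ f x := fun x => le_trans (hψ2 x) (min_le_left _ _)
  set χ : X →ᵇ ℝ := b⁻¹ • (φ - a • ψ - const X ε) with hχdef
  have hχapp : ∀ x, χ x = b⁻¹ * (φ x - a * ψ x - ε) := by
    intro x
    rw [hχdef]
    simp [mul_comm]
  have hχg : ∀ x, χ x ≤ g x := by
    intro x
    rw [hχapp]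
    have h1 : u₀ x - ε / a ≤ ψ x := le_trans (by
      have : u₀ x ≤ u x := le_max_left _ _
      linarith) (hψ1 x)
    have h2 : a * u₀ x = φ x - b * g x := by
      rw [hu₀def]
      field_simp
    have h3 : a * (u₀ x - ε / a) ≤ a * ψ x := mul_le_mul_of_nonneg_left h1 ha.le
    have h4 : a * (ε / a) = ε := by field_simp
    have h5 : φ x - a * ψ x - ε ≤ b * g x := by nlinarith [h3, h2, h4]
    calc b⁻¹ * (φ x - a * ψ x - ε) ≤ b⁻¹ * (b * g x) :=
          mul_le_mul_of_nonneg_left h5 (inv_nonneg.2 hb.le)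
      _ = g x := by field_simp
  refine ⟨ψ, χ, hψf, hχg, ?_⟩
  ext x
  simp only [coe_add, Pi.add_apply, coe_smul, Pi.smul_apply, smul_eq_mul, const_apply,
    hχapp x]
  field_simp
  ring


lemma ereal_mul_ne_bot {a : ℝ} (ha : 0 < a) {x : EReal} (hx : x ≠ ⊥) : (a : EReal) * x ≠ ⊥ := by
  induction x using EReal.rec with
  | bot => exact absurd rfl hx
  | coe y => rw [← EReal.coe_mul]; exact EReal.coe_ne_bot _
  | top =>
      rw [EReal.mul_top_of_pos (by exact_mod_cast ha)]
      simp

end ConeIsoProof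






theorem cone_isomorphism [T2Space X] [NormalSpace X] :
    ∃ Δ : X → WeakDual ℝ (X →ᵇ ℝ), (∀ (x : X) (φ : X →ᵇ ℝ), Δ x φ = φ x) ∧
      -- T maps SCI(X) into Γ(co̅^{w*}(Δ(X)))
      (∀ f : X → ℝ, IsSCI f → IsGamma Δ (Tmap Δ f)) ∧
      -- T is injective on SCI(X)
      (∀ f g : X → ℝ, IsSCI f → IsSCI g → Tmap Δ f = Tmap Δ g → f = g) ∧
      -- T is onto Γ(co̅^{w*}(Δ(X)))
      (∀ h, IsGamma Δ h → ∃ f : X → ℝ, IsSCI f ∧ Tmap Δ f = h) ∧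
      -- T(αf + βg) = αT(f) + βT(g) for α, β ≥ 0
      (∀ f g : X → ℝ, IsSCI f → IsSCI g → ∀ a b : ℝ, 0 ≤ a → 0 ≤ b →
        Tmap Δ (fun x => a * f x + b * g x) =
          fun Q => (a : EReal) * Tmap Δ f Q + (b : EReal) * Tmap Δ g Q) ∧
      -- T is an order isomorphism
      (∀ f g : X → ℝ, IsSCI f → IsSCI g →
        ((∀ x, f x ≤ g x) ↔ ∀ Q, Tmap Δ f Q ≤ Tmap Δ g Q)) := by
  classical
  open ConeIsoProof in
  refine ⟨Del, fun x φ => rfl, ?_, ?_, ?_, ?_, ?_⟩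
  · -- Gamma membership
    intro f hf
    obtain ⟨hlsc, m, hm⟩ := id hf
    refine ⟨f, ⟨const X m, fun x => by simpa using hm x⟩, ?_⟩
    rintro ⟨Q, hQ⟩
    exact rep hf hQ
  · -- injectivity
    intro f g hf hg hT
    funext x
    have h1 := congrFun hT ⟨Del x, Del_mem x⟩
    rw [tmap_del hf x, tmap_del hg x] at h1
    exact_mod_cast h1
  · -- surjectivity
    intro h hh
    obtain ⟨lam, ⟨ψ₀, hψ₀⟩, hrep⟩ := hh
    haveI hne : Nonempty {φ : X →ᵇ ℝ // ∀ x, φ x ≤ lam x} := ⟨⟨ψ₀, hψ₀⟩⟩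
    set F : X → ℝ := fun x => ⨆ φ : {φ : X →ᵇ ℝ // ∀ x, φ x ≤ lam x}, (φ : X →ᵇ ℝ) x
      with hFdef
    have hbdd : ∀ x, BddAbove (Set.range
        fun φ : {φ : X →ᵇ ℝ // ∀ x, φ x ≤ lam x} => (φ : X →ᵇ ℝ) x) := by
      intro x
      refine ⟨lam x, ?_⟩
      rintro _ ⟨φ, rfl⟩
      exact φ.2 x
    have hFlam : ∀ x, F x ≤ lam x := fun x => ciSup_le fun φ => φ.2 x
    have hFge : ∀ (φ : {φ : X →ᵇ ℝ // ∀ x, φ x ≤ lam x}) x, (φ : X →ᵇ ℝ) x ≤ F x :=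
      fun φ x => le_ciSup (hbdd x) φ
    have hFsci : IsSCI F := by
      constructor
      · intro x y hy
        obtain ⟨φ, hφ⟩ := exists_lt_of_lt_ciSup hy
        filter_upwards [((φ : X →ᵇ ℝ).continuous.tendsto x).eventually
          (eventually_gt_nhds hφ)] with x' h'
        exact lt_of_lt_of_le h' (hFge φ x')
      · refine ⟨-‖ψ₀‖, fun x => ?_⟩
        have h1 : -‖ψ₀‖ ≤ ψ₀ x := (abs_le.1 (by simpa using ψ₀.norm_coe_le_norm x)).1
        exact le_trans h1 (hFge ⟨ψ₀, hψ₀⟩ x)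
    refine ⟨F, hFsci, ?_⟩
    funext Qs
    rcases Qs with ⟨Q, hQ⟩
    rw [rep hFsci hQ, hrep ⟨Q, hQ⟩]
    apply le_antisymm
    · apply iSup_le
      rintro ⟨φ, hφ⟩
      exact le_iSup_of_le ⟨φ, fun x => le_trans (hφ x) (hFlam x)⟩ le_rfl
    · apply iSup_le
      rintro ⟨φ, hφ⟩
      exact le_iSup_of_le ⟨φ, fun x => hFge ⟨φ, hφ⟩ x⟩ le_rfl
  · -- additivity
    intro f g hf hg a b ha hb
    funext Qs
    rcases Qs with ⟨Q, hQ⟩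
    have hG := hull_subset_good hQ
    haveI hX : Nonempty X := nonempty_of_hull hQ
    obtain ⟨hfl, mf, hmf⟩ := id hf
    obtain ⟨hgl, mg, hmg⟩ := id hg
    have hh : IsSCI (fun x => a * f x + b * g x) :=
      ⟨lsc_comb hfl hgl ha hb, a * mf + b * mg, fun x =>
        add_le_add (mul_le_mul_of_nonneg_left (hmf x) ha)
          (mul_le_mul_of_nonneg_left (hmg x) hb)⟩
    haveI hNf : Nonempty {φ : X →ᵇ ℝ // ∀ x, φ x ≤ f x} :=
      ⟨⟨const X mf, fun x => by simpa using hmf x⟩⟩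
    haveI hNg : Nonempty {φ : X →ᵇ ℝ // ∀ x, φ x ≤ g x} :=
      ⟨⟨const X mg, fun x => by simpa using hmg x⟩⟩
    show Tmap Del (fun x => a * f x + b * g x) ⟨Q, hQ⟩ =
      (a : EReal) * Tmap Del f ⟨Q, hQ⟩ + (b : EReal) * Tmap Del g ⟨Q, hQ⟩
    rw [rep hh hQ, rep hf hQ, rep hg hQ]
    apply le_antisymm
    · -- hard direction
      apply iSup_le
      rintro ⟨φ, hφ⟩
      rcases ha.eq_or_lt with rfl | ha'
      · rcases hb.eq_or_lt with rfl | hb'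
        · have h0 : Q φ ≤ 0 := by
            have h1 := good_mono hG (φ := φ) (ψ := 0) (fun x => by simpa using hφ x)
            simpa [map_zero] using h1
          simp only [EReal.coe_zero, zero_mul, add_zero]
          exact_mod_cast h0
        · simp only [EReal.coe_zero, zero_mul, zero_add]
          have hχ : ∀ x, (b⁻¹ • φ) x ≤ g x := by
            intro x
            have h1 : φ x ≤ b * g x := by simpa using hφ x
            have h2 : b⁻¹ * φ x ≤ b⁻¹ * (b * g x) :=
              mul_le_mul_of_nonneg_left h1 (inv_nonneg.2 hb)
            have h3 : b⁻¹ * (b * g x) = g x := by field_simp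
            simpa [h3] using h2
          have h1 : (Q φ : EReal) = (b : EReal) * (Q (b⁻¹ • φ) : EReal) := by
            rw [map_smul, smul_eq_mul, ← EReal.coe_mul]
            congr 1
            field_simp
          rw [h1]
          exact ereal_mul_le hb (le_iSup_of_le ⟨b⁻¹ • φ, hχ⟩ le_rfl)
      · rcases hb.eq_or_lt with rfl | hb'
        · simp only [EReal.coe_zero, zero_mul, add_zero]
          have hψ : ∀ x, (a⁻¹ • φ) x ≤ f x := by
            intro x
            have h1 : φ x ≤ a * f x := by simpa using hφ x
            have h2 : a⁻¹ * φ x ≤ a⁻¹ * (a * f x) :=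
              mul_le_mul_of_nonneg_left h1 (inv_nonneg.2 ha)
            have h3 : a⁻¹ * (a * f x) = f x := by field_simp
            simpa [h3] using h2
          have h1 : (Q φ : EReal) = (a : EReal) * (Q (a⁻¹ • φ) : EReal) := by
            rw [map_smul, smul_eq_mul, ← EReal.coe_mul]
            congr 1
            field_simp
          rw [h1]
          exact ereal_mul_le ha (le_iSup_of_le ⟨a⁻¹ • φ, hψ⟩ le_rfl)
        · -- a, b > 0 : use the decomposition
          have hSf_ne : (⨆ ψ : {φ : X →ᵇ ℝ // ∀ x, φ x ≤ f x}, (Q (ψ : X →ᵇ ℝ) : EReal)) ≠ ⊥ := by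
            intro hbot
            have hle : (Q (const X mf) : EReal) ≤ ⊥ := hbot ▸
              le_iSup_of_le ⟨const X mf, fun x => by simpa using hmf x⟩ le_rfl
            exact (EReal.coe_ne_bot _) (le_bot_iff.1 hle)
          have hSg_ne : (⨆ χ : {φ : X →ᵇ ℝ // ∀ x, φ x ≤ g x}, (Q (χ : X →ᵇ ℝ) : EReal)) ≠ ⊥ := by
            intro hbot
            have hle : (Q (const X mg) : EReal) ≤ ⊥ := hbot ▸
              le_iSup_of_le ⟨const X mg, fun x => by simpa using hmg x⟩ le_rfl
            exact (EReal.coe_ne_bot _) (le_bot_iff.1 hle)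
          have hbot : (a : EReal) * (⨆ ψ : {φ : X →ᵇ ℝ // ∀ x, φ x ≤ f x}, (Q (ψ : X →ᵇ ℝ) : EReal))
              + (b : EReal) * (⨆ χ : {φ : X →ᵇ ℝ // ∀ x, φ x ≤ g x}, (Q (χ : X →ᵇ ℝ) : EReal)) ≠ ⊥ := by
            rw [Ne, EReal.add_eq_bot_iff]
            push_neg
            exact ⟨ereal_mul_ne_bot ha' hSf_ne, ereal_mul_ne_bot hb' hSg_ne⟩
          apply ereal_le_of_forall_add_eps hbot
          intro ε hε
          obtain ⟨ψ, χ, hψf, hχg, hid⟩ :=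
            decompose ⟨hfl, mf, hmf⟩ ⟨hgl, mg, hmg⟩ ha' hb' hφ hε
          have hval : Q φ = a * Q ψ + b * Q χ + ε := by
            rw [hid, map_add, map_add, map_smul, map_smul, good_const hG,
              smul_eq_mul, smul_eq_mul]
          rw [hval]
          push_cast
          refine add_le_add (add_le_add ?_ ?_) le_rfl
          · exact ereal_mul_le ha (le_iSup_of_le ⟨ψ, hψf⟩ le_rfl)
          · exact ereal_mul_le hb (le_iSup_of_le ⟨χ, hχg⟩ le_rfl)
    · -- easy direction
      rw [ereal_mul_iSup ha, ereal_mul_iSup hb]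
      apply EReal.add_le_of_forall_lt
      intro p hp q hq
      obtain ⟨ψ, hψ⟩ := lt_iSup_iff.1 hp
      obtain ⟨χ, hχ⟩ := lt_iSup_iff.1 hq
      have hmem : ∀ x, (a • (ψ : X →ᵇ ℝ) + b • (χ : X →ᵇ ℝ)) x ≤ a * f x + b * g x := by
        intro x
        have h1 : a * (ψ : X →ᵇ ℝ) x ≤ a * f x := mul_le_mul_of_nonneg_left (ψ.2 x) ha
        have h2 : b * (χ : X →ᵇ ℝ) x ≤ b * g x := mul_le_mul_of_nonneg_left (χ.2 x) hb
        simp only [coe_add, Pi.add_apply, coe_smul, Pi.smul_apply, smul_eq_mul]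
        linarith
      calc p + q ≤ (a : EReal) * (Q (ψ : X →ᵇ ℝ) : EReal)
            + (b : EReal) * (Q (χ : X →ᵇ ℝ) : EReal) := add_le_add hψ.le hχ.le
        _ = (Q (a • (ψ : X →ᵇ ℝ) + b • (χ : X →ᵇ ℝ)) : EReal) := by
            rw [map_add, map_smul, map_smul, smul_eq_mul, smul_eq_mul,
              EReal.coe_add, EReal.coe_mul, EReal.coe_mul]
        _ ≤ _ := le_iSup_of_le ⟨a • (ψ : X →ᵇ ℝ) + b • (χ : X →ᵇ ℝ), hmem⟩ le_rfl
  · -- order isomorphism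
    intro f g hf hg
    constructor
    · intro hle Qs
      rcases Qs with ⟨Q, hQ⟩
      rw [rep hf hQ, rep hg hQ]
      apply iSup_le
      rintro ⟨φ, hφ⟩
      exact le_iSup_of_le ⟨φ, fun x => le_trans (hφ x) (hle x)⟩ le_rfl
    · intro hT x
      have h1 := hT ⟨Del x, Del_mem x⟩
      rw [tmap_del hf x, tmap_del hg x] at h1
      exact_mod_cast h1
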